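/- Let P ∈ ℝ[X] and let u ∈ ℝ be a root of P of multiplicity k (P^{(i)}(u) = 0 for i < k, P^{(k)}(u) ≠ 0). Let R ∈ ℝ[X] with R(u) ≠ 0, let ε ∈ ℝ* be a nonzero infinitesimal, and set Q := P + ε·R ∈ ℝ*[X] (a linear deformation of P). If ξ ∈ ℝ* is infinitesimal and Q(u + ξ) = 0, then ξ^k·P^{(k)}(u)/(k!·ε·R(u)) has standard part −1; in particular, when k = 1, (ξ·P'(u))/(ε·R(u)) has standard part −1. -/

import Mathlib

open Hyperreal Polynomial

/-- The coercion `ℝ → ℝ*` as a ring homomorphism. -/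
noncomputable def realToHyper : ℝ →+* ℝ* :=
  (Filter.Germ.coeRingHom _).comp (Pi.constRingHom ℕ ℝ)

lemma realToHyper_eq (r : ℝ) : realToHyper r = (r : ℝ*) := rfl

lemma isSt_eval (p : Polynomial ℝ) {x : ℝ*} {r : ℝ} (h : IsSt x r) :
    IsSt ((p.map realToHyper).eval x) (p.eval r) := by
  induction p using Polynomial.induction_on' with
  | add p q hp hq => simpa using hp.add hq
  | monomial n a =>
      have hx : IsSt (x ^ n) (r ^ n) := by
        induction n with
        | zero => simpa using isSt_refl_real 1
        | succ m ih => rw [pow_succ, pow_succ]; exact ih.mul h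
      simpa [realToHyper_eq] using (isSt_refl_real a).mul hx

/-- Linear deformation `Q = P + ε R`: if `u` is a root of `P` of multiplicity `k`,
`R(u) ≠ 0` and `u + ξ` is a root of `Q` with `ξ` infinitesimal, then
`st (ξ^k P⁽ᵏ⁾(u)/(k! ε R(u))) = -1`. -/
theorem linear_deformation_root_estimate (P R : Polynomial ℝ) (u : ℝ) (k : ℕ)
    (hmult : ∀ i < k, (derivative^[i] P).eval u = 0)
    (hk : (derivative^[k] P).eval u ≠ 0)
    (hR : R.eval u ≠ 0)
    (e : ℝ*) (he0 : e ≠ 0) (he : Infinitesimal e)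
    (ξ : ℝ*) (hξ : Infinitesimal ξ)
    (hroot : (P.map realToHyper + Polynomial.C e * R.map realToHyper).eval ((u : ℝ*) + ξ) = 0) :
    IsSt (ξ ^ k * (((derivative^[k] P).eval u : ℝ) : ℝ*) /
      ((Nat.factorial k : ℝ*) * e * ((R.eval u : ℝ) : ℝ*))) (-1) := by
  set c : ℝ := (derivative^[k] P).eval u with hc
  -- the Taylor expansion of P at u is divisible by X^k
  have hdvd : (X : Polynomial ℝ) ^ k ∣ taylor u P := by
    rw [X_pow_dvd_iff]
    intro d hd
    rw [taylor_coeff]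
    have h1 : (d.factorial : ℝ) * (hasseDeriv d P).eval u = 0 := by
      have := congrFun (factorial_smul_hasseDeriv (R := ℝ) d) P
      have := congrArg (Polynomial.eval u) this
      simpa [hmult d hd, nsmul_eq_mul] using this
    have : (d.factorial : ℝ) ≠ 0 := Nat.cast_ne_zero.2 d.factorial_ne_zero
    exact by
      rcases mul_eq_zero.1 h1 with h | h
      · exact absurd h this
      · exact h
  obtain ⟨h, hgh⟩ := hdvd
  -- constant term of h
  have hc0 : (k.factorial : ℝ) * h.eval 0 = c := by
    have h1 : (taylor u P).coeff k = h.coeff 0 := by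
      rw [hgh]
      simpa using coeff_X_pow_mul h k 0
    have h2 : (k.factorial : ℝ) * (hasseDeriv k P).eval u = c := by
      have := congrFun (factorial_smul_hasseDeriv (R := ℝ) k) P
      have := congrArg (Polynomial.eval u) this
      simpa [nsmul_eq_mul] using this
    rw [← taylor_coeff, h1] at h2
    simpa [Polynomial.eval_zero, ← Polynomial.coeff_zero_eq_eval_zero] using h2
  have hkf : (k.factorial : ℝ) ≠ 0 := Nat.cast_ne_zero.2 k.factorial_ne_zero
  have hh0 : h.eval 0 ≠ 0 := by
    intro h0
    rw [h0, mul_zero] at hc0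
    exact hk hc0.symm
  set H : ℝ* := (h.map realToHyper).eval ξ with hH
  set S : ℝ* := (R.map realToHyper).eval ((u : ℝ*) + ξ) with hS
  -- standard parts
  have hHst : IsSt H (h.eval 0) := isSt_eval h hξ
  have huξ : IsSt ((u : ℝ*) + ξ) u := by simpa using (isSt_refl_real u).add hξ
  have hSst : IsSt S (R.eval u) := isSt_eval R huξ
  have hHne : H ≠ 0 := by
    intro h0
    exact hh0 ((h0 ▸ hHst).unique (by simpa [Infinitesimal] using isSt_refl_real (0:ℝ)))
  -- the root equation
  have hPeval : (P.map realToHyper).eval ((u : ℝ*) + ξ) = ξ ^ k * H := by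
    have : P = (taylor u P).comp (X - C u) := by
      rw [taylor_apply, comp_assoc]
      simp
    calc (P.map realToHyper).eval ((u : ℝ*) + ξ)
        = (((taylor u P).comp (X - C u)).map realToHyper).eval ((u : ℝ*) + ξ) := by rw [← this]
      _ = (((X:Polynomial ℝ) ^ k * h).map realToHyper).eval ξ := by
          rw [hgh, Polynomial.map_comp, eval_comp]
          simp [realToHyper_eq]
      _ = ξ ^ k * H := by simp [hH]
  have heq : ξ ^ k * H + e * S = 0 := by
    rw [eval_add, eval_mul, eval_C, hPeval] at hroot
    exact hroot
  have hRne : ((R.eval u : ℝ) : ℝ*) ≠ 0 := by exact_mod_cast hR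
  have hkfh : ((k.factorial : ℝ) : ℝ*) ≠ 0 := by exact_mod_cast hkf
  -- rewrite the target expression
  have hrw : ξ ^ k * ((c : ℝ) : ℝ*) / ((Nat.factorial k : ℝ*) * e * ((R.eval u : ℝ) : ℝ*))
      = -(S * ((c : ℝ) : ℝ*)) / (H * ((k.factorial : ℝ) : ℝ*) * ((R.eval u : ℝ) : ℝ*)) := by
    have hξk : ξ ^ k = -(e * S) / H := by
      rw [eq_div_iff hHne]
      linarith [heq]
    rw [hξk]
    have : (Nat.factorial k : ℝ*) = ((k.factorial : ℝ) : ℝ*) := by norm_cast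
    rw [this]
    field_simp
  rw [hrw]
  -- compute the standard part
  have hnum : IsSt (-(S * ((c : ℝ) : ℝ*))) (-(R.eval u * c)) :=
    (hSst.mul (isSt_refl_real c)).neg
  have hden : IsSt (H * ((k.factorial : ℝ) : ℝ*) * ((R.eval u : ℝ) : ℝ*))
      (h.eval 0 * (k.factorial : ℝ) * R.eval u) :=
    (hHst.mul (isSt_refl_real _)).mul (isSt_refl_real _)
  have hdne : h.eval 0 * (k.factorial : ℝ) * R.eval u ≠ 0 :=
    mul_ne_zero (mul_ne_zero hh0 hkf) hR
  have hdni : ¬ Infinitesimal (H * ((k.factorial : ℝ) : ℝ*) * ((R.eval u : ℝ) : ℝ*)) := by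
    intro h0
    exact hdne (hden.unique h0)
  have : IsSt (-(S * ((c : ℝ) : ℝ*)) / (H * ((k.factorial : ℝ) : ℝ*) * ((R.eval u : ℝ) : ℝ*)))
      (-(R.eval u * c) / (h.eval 0 * (k.factorial : ℝ) * R.eval u)) := by
    rw [div_eq_mul_inv, div_eq_mul_inv]
    exact hnum.mul (IsSt.inv hdni hden)
  have hval : -(R.eval u * c) / (h.eval 0 * (k.factorial : ℝ) * R.eval u) = -1 := by
    rw [show h.eval 0 * (k.factorial : ℝ) = c by rw [mul_comm]; exact hc0]
    field_simp
  rwa [hval] at this
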